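/- Let X be a real Hilbert space (complete), let f : X → ℝ be convex and continuous, let x̄* ∈ ∂f(x̄), let q > 0, and set S = {u ∈ X | x̄* ∈ ∂f(u)}. Suppose ∂f is metrically q-subregular at (x̄, x̄*) with modulus κ̃ > 0, i.e., there is γ > 0 such that infDist(x, S) ≤ κ̃·‖x* − x̄*‖^q for all x ∈ B(x̄, γ) and all x* ∈ ∂f(x). Then for every α with 0 < α < κ̃^(−1/q) there exists η > 0 such that f(x) ≥ f(x̄) + ⟪x̄*, x − x̄⟫ + (qα/(1+q))·infDist(x, S)^((1+q)/q) for all x in the closed ball B(x̄, η). -/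

import Mathlib

open Metric
open scoped RealInnerProductSpace

lemma exists_prox {X : Type*} [NormedAddCommGroup X] [InnerProductSpace ℝ X] [CompleteSpace X]
    (φ : X → ℝ) (hφ : ConvexOn ℝ Set.univ φ) (hc : Continuous φ)
    (hnn : ∀ z, 0 ≤ φ z) (u : X) (cp : ℝ) (hcp : 0 < cp) :
    ∃ p : X, ∀ z : X, φ p + cp * ‖p - u‖ ^ 2 ≤ φ z + cp * ‖z - u‖ ^ 2 := by
  set h : X → ℝ := fun z => φ z + cp * ‖z - u‖ ^ 2 with hh
  have hcont : Continuous h := by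
    apply hc.add
    exact (continuous_const.mul (((continuous_id.sub continuous_const).norm).pow 2))
  have hbdd : BddBelow (Set.range h) := by
    refine ⟨0, ?_⟩
    rintro _ ⟨z, rfl⟩
    have := hnn z
    simp only [h]
    positivity
  have hne : (Set.range h).Nonempty := ⟨h u, u, rfl⟩
  set m := sInf (Set.range h) with hm
  have hm_le : ∀ z, m ≤ h z := fun z => csInf_le hbdd ⟨z, rfl⟩
  -- midpoint strong convexity
  have key : ∀ z w : X, h ((1/2 : ℝ) • z + (1/2 : ℝ) • w) + cp/4 * ‖z - w‖^2 ≤ (h z + h w)/2 := by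
    intro z w
    have hφm : φ ((1/2 : ℝ) • z + (1/2 : ℝ) • w) ≤ (1/2 : ℝ) * φ z + (1/2 : ℝ) * φ w :=
      hφ.2 (Set.mem_univ z) (Set.mem_univ w) (by norm_num) (by norm_num) (by norm_num)
    have hpt : (1/2 : ℝ) • z + (1/2 : ℝ) • w - u = (1/2 : ℝ) • ((z - u) + (w - u)) := by
      module
    have hnorm : ‖(1/2 : ℝ) • z + (1/2 : ℝ) • w - u‖^2
        = (‖z - u‖^2 + ‖w - u‖^2)/2 - ‖z - w‖^2/4 := by
      rw [hpt, norm_smul]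
      have h1 : ‖(z - u) + (w - u)‖^2 = ‖z-u‖^2 + 2*⟪z-u, w-u⟫ + ‖w-u‖^2 :=
        norm_add_sq_real _ _
      have h2 : ‖z - w‖^2 = ‖z-u‖^2 - 2*⟪z-u, w-u⟫ + ‖w-u‖^2 := by
        have : z - w = (z - u) - (w - u) := by abel
        rw [this, norm_sub_sq_real]
      have : (‖(1/2:ℝ)‖ * ‖(z - u) + (w - u)‖)^2 = (1/4) * ‖(z - u) + (w - u)‖^2 := by
        rw [Real.norm_eq_abs]; rw [mul_pow]; norm_num
      rw [this, h1]
      linarith [h2]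
    simp only [h]
    rw [hnorm]
    nlinarith [hφm]
  -- minimizing sequence
  have hex : ∀ n : ℕ, ∃ z : X, h z < m + 1/(n+1) := by
    intro n
    have hlt : m < m + 1/(n+1) := by
      have : (0:ℝ) < 1/(n+1) := by positivity
      linarith
    obtain ⟨y, ⟨z, rfl⟩, hy⟩ := (csInf_lt_iff hbdd hne).mp hlt
    exact ⟨z, hy⟩
  choose seq hseq using hex
  have hcauchy : CauchySeq seq := by
    rw [Metric.cauchySeq_iff]
    intro ε hε
    obtain ⟨N, hN⟩ := exists_nat_gt ((4/cp)/ε^2)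
    refine ⟨N, fun j hj k hk => ?_⟩
    have hjN : h (seq j) < m + 1/(N+1) := by
      refine (hseq j).trans_le ?_
      have : (1:ℝ)/(j+1) ≤ 1/(N+1) := by
        apply one_div_le_one_div_of_le (by positivity)
        exact_mod_cast Nat.succ_le_succ hj
      linarith
    have hkN : h (seq k) < m + 1/(N+1) := by
      refine (hseq k).trans_le ?_
      have : (1:ℝ)/(k+1) ≤ 1/(N+1) := by
        apply one_div_le_one_div_of_le (by positivity)
        exact_mod_cast Nat.succ_le_succ hk
      linarith
    have hmid := key (seq j) (seq k)
    have hmmid := hm_le ((1/2 : ℝ) • seq j + (1/2 : ℝ) • seq k)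
    have hsq : ‖seq j - seq k‖^2 < 4/cp * (1/(N+1)) := by
      have h4 : cp/4 * ‖seq j - seq k‖^2 ≤ (h (seq j) + h (seq k))/2 - m := by linarith
      have : cp/4 * ‖seq j - seq k‖^2 < 1/(N+1) := by linarith
      calc ‖seq j - seq k‖^2 = (4/cp) * (cp/4 * ‖seq j - seq k‖^2) := by
            field_simp
        _ < (4/cp) * (1/(N+1)) := by
            apply mul_lt_mul_of_pos_left this (by positivity)
    have hNbig : 4/cp * (1/(N+1)) < ε^2 := by
      rw [div_lt_iff₀ (by positivity : (0:ℝ) < ε^2)] at hN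
      have hN1 : (4/cp) < ε^2 * (N+1) := by
        have : (N:ℝ) < N + 1 := by linarith
        nlinarith [sq_nonneg ε, hε]
      rw [mul_one_div, div_lt_iff₀ (by positivity : (0:ℝ) < (N:ℝ)+1)]
      linarith
    have : ‖seq j - seq k‖^2 < ε^2 := lt_trans hsq hNbig
    have habs : ‖seq j - seq k‖ < ε := by
      nlinarith [norm_nonneg (seq j - seq k)]
    rw [dist_eq_norm]
    exact habs
  obtain ⟨p, hp⟩ := cauchySeq_tendsto_of_complete hcauchy
  have hhp : Filter.Tendsto (fun n => h (seq n)) Filter.atTop (nhds (h p)) :=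
    (hcont.tendsto p).comp hp
  have hhm : Filter.Tendsto (fun n => h (seq n)) Filter.atTop (nhds m) := by
    apply tendsto_of_tendsto_of_tendsto_of_le_of_le (tendsto_const_nhds)
      (by simpa using (tendsto_const_nhds (x := m)).add tendsto_one_div_add_atTop_nhds_zero_nat)
    · exact fun n => hm_le _
    · intro n
      have := (hseq n).le
      simpa [one_div] using this
  have : h p = m := tendsto_nhds_unique hhp hhm
  exact ⟨p, fun z => by rw [show φ p + cp * ‖p - u‖^2 = h p from rfl, this]; exact hm_le z⟩

lemma prox_subgrad {X : Type*} [NormedAddCommGroup X] [InnerProductSpace ℝ X]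
    (φ : X → ℝ) (hφ : ConvexOn ℝ Set.univ φ) (u p : X) (cp : ℝ) (hcp : 0 < cp)
    (hmin : ∀ z : X, φ p + cp * ‖p - u‖ ^ 2 ≤ φ z + cp * ‖z - u‖ ^ 2) :
    ∀ z : X, φ p + ⟪(2*cp) • (u - p), z - p⟫ ≤ φ z := by
  intro z
  set w := z - p with hw
  have hkey : ∀ t : ℝ, 0 < t → t ≤ 1 →
      ⟪(2*cp) • (u - p), w⟫ ≤ φ z - φ p + cp * t * ‖w‖^2 := by
    intro t ht ht1
    have hconv : φ (p + t • w) ≤ (1-t) * φ p + t * φ z := by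
      have hpt : (1-t) • p + t • z = p + t • w := by rw [hw]; module
      have := hφ.2 (Set.mem_univ p) (Set.mem_univ z) (by linarith : (0:ℝ) ≤ 1 - t) ht.le
        (by ring : (1:ℝ) - t + t = 1)
      rw [hpt] at this
      simpa [smul_eq_mul] using this
    have hmin' := hmin (p + t • w)
    have hnorm : ‖p + t • w - u‖^2 = ‖p - u‖^2 + 2*t*⟪p - u, w⟫ + t^2*‖w‖^2 := by
      have : p + t • w - u = (p - u) + t • w := by abel
      rw [this, norm_add_sq_real, real_inner_smul_right, norm_smul, Real.norm_eq_abs,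
        mul_pow, sq_abs]
      ring
    have ht' : 0 ≤ t * ((φ z - φ p) + 2*cp*⟪p - u, w⟫ + cp * t * ‖w‖^2) := by
      nlinarith [hconv, hmin', hnorm]
    have h2 : 0 ≤ (φ z - φ p) + 2*cp*⟪p - u, w⟫ + cp * t * ‖w‖^2 :=
      nonneg_of_mul_nonneg_right ht' ht
    have hi : ⟪(2*cp) • (u - p), w⟫ = -(2*cp*⟪p - u, w⟫) := by
      rw [real_inner_smul_left]
      have : (u - p : X) = -(p - u) := by abel
      rw [this, inner_neg_left]
      ring
    rw [hi]; linarith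
  refine le_of_forall_pos_le_add fun ε hε => ?_
  have hwn : (0:ℝ) ≤ cp * ‖w‖^2 := by positivity
  set t : ℝ := min 1 (ε / (cp * ‖w‖^2 + 1)) with htdef
  have ht0 : 0 < t := lt_min one_pos (by positivity)
  have ht1 : t ≤ 1 := min_le_left _ _
  have := hkey t ht0 ht1
  have hbound : cp * t * ‖w‖^2 ≤ ε := by
    have h1 : t ≤ ε / (cp * ‖w‖^2 + 1) := min_le_right _ _
    have h2 : cp * t * ‖w‖^2 ≤ (ε / (cp * ‖w‖^2 + 1)) * (cp * ‖w‖^2) := by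
      rw [mul_comm (cp) t, mul_assoc]
      exact mul_le_mul_of_nonneg_right h1 hwn
    have h3 : (ε / (cp * ‖w‖^2 + 1)) * (cp * ‖w‖^2) ≤ ε := by
      rw [div_mul_eq_mul_div, div_le_iff₀ (by positivity)]
      nlinarith
    linarith
  linarith
set_option maxHeartbeats 1000000 in
open scoped RealInnerProductSpace

lemma growth_aux {X : Type*} [NormedAddCommGroup X] [InnerProductSpace ℝ X] [CompleteSpace X]
    (g : X → ℝ) (hg : ConvexOn ℝ Set.univ g) (hgc : Continuous g) (hnn : ∀ z, 0 ≤ g z)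
    (S : Set X) (xb : X) (hxbS : xb ∈ S)
    (q κ γ α : ℝ) (hq : 0 < q) (hκ : 0 < κ) (hγ : 0 < γ) (hα : 0 < α)
    (hαa : α < κ ^ (-(1:ℝ)/q))
    (hsub : ∀ u ∈ closedBall xb γ, ∀ v : X, (∀ z, g u + ⟪v, z - u⟫ ≤ g z) →
      Metric.infDist u S ≤ κ * ‖v‖ ^ q)
    (exists_prox : ∀ (u : X) (cp : ℝ), 0 < cp →
      ∃ p : X, ∀ z : X, g p + cp * ‖p - u‖ ^ 2 ≤ g z + cp * ‖z - u‖ ^ 2)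
    (prox_subgrad : ∀ (u p : X) (cp : ℝ), 0 < cp →
      (∀ z : X, g p + cp * ‖p - u‖ ^ 2 ≤ g z + cp * ‖z - u‖ ^ 2) →
      ∀ z : X, g p + ⟪(2*cp) • (u - p), z - p⟫ ≤ g z) :
    ∃ η > (0:ℝ), ∀ x ∈ closedBall xb η,
      q * α / (1 + q) * Metric.infDist x S ^ ((1+q)/q) ≤ g x := by
  set a := κ ^ (-(1:ℝ)/q) with ha_def
  have ha : 0 < a := Real.rpow_pos_of_pos hκ _
  set r := (1+q)/q with hr_def
  have hr_eq : r = 1 + 1/q := by rw [hr_def]; field_simp; ring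
  have hq1 : 0 < (1:ℝ)/q := by positivity
  have hrpos : 0 < r := by rw [hr_eq]; linarith
  have hr1 : 1 ≤ r := by rw [hr_eq]; linarith
  set cstar := q * α / (1 + q) with hcs_def
  have hcs : 0 < cstar := by rw [hcs_def]; positivity
  have hcsr : cstar * r = α := by
    rw [hcs_def, hr_def]; field_simp
  set α' := (α + a)/2 with hα'_def
  have hα'pos : 0 < α' := by rw [hα'_def]; linarith
  have hα'lt : α' < a := by rw [hα'_def]; linarith
  have hαα' : α < α' := by rw [hα'_def]; linarith
  have hfrac1 : 0 < α'/a := div_pos hα'pos ha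
  have hfrac2 : α'/a < 1 := (div_lt_one ha).2 hα'lt
  set β₀ := 1 - (α'/a)^q with hβ₀_def
  have hb1 : (α'/a)^q < 1 := Real.rpow_lt_one hfrac1.le hfrac2 hq
  have hb2 : 0 < (α'/a)^q := Real.rpow_pos_of_pos hfrac1 q
  have hβ₀pos : 0 < β₀ := by rw [hβ₀_def]; linarith only [hb1]
  have hβ₀lt1 : β₀ < 1 := by rw [hβ₀_def]; linarith only [hb2]
  have hkey : a * (1 - β₀) ^ ((1:ℝ)/q) = α' := by
    have h1 : (1 - β₀) = (α'/a)^q := by rw [hβ₀_def]; ring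
    rw [h1, ← Real.rpow_mul hfrac1.le, mul_one_div, div_self hq.ne', Real.rpow_one,
      mul_div_cancel₀ _ ha.ne']
  set M := max (cstar/β₀^2) 1 with hM_def
  have hM1 : (1:ℝ) ≤ M := le_max_right _ _
  have hM0 : (0:ℝ) < M := lt_of_lt_of_le one_pos hM1
  have hMc : cstar ≤ M * β₀^2 := by
    have h := le_max_left (cstar/β₀^2) 1
    rw [← hM_def] at h
    rw [div_le_iff₀ (by positivity : (0:ℝ) < β₀^2)] at h
    linarith only [h]
  set θ := α' - α with hθ_def
  have hθpos : 0 < θ := by rw [hθ_def]; linarith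
  set δ := α'/M * θ with hδ_def
  have hδpos : 0 < δ := by rw [hδ_def]; positivity
  have hβ₀1 : (1:ℝ) ≤ 1 + β₀ := by linarith
  -- main induction
  have main : ∀ n : ℕ, ∀ x ∈ closedBall xb (γ/(1+β₀)^n),
      min ((n:ℝ)*δ) cstar * Metric.infDist x S ^ r ≤ g x := by
    intro n
    induction n with
    | zero =>
      intro x _
      simp only [Nat.cast_zero, zero_mul]
      rw [min_eq_left hcs.le, zero_mul]
      exact hnn x
    | succ n ih =>
      intro x hx
      set d := Metric.infDist x S with hd_def
      have hd0 : 0 ≤ d := Metric.infDist_nonneg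
      rcases hd0.eq_or_lt with hdeq | hdpos
      · rw [← hdeq, Real.zero_rpow (by positivity), mul_zero]; exact hnn x
      · have hdx : d ≤ dist x xb := Metric.infDist_le_dist_of_mem hxbS
        have hxball : dist x xb ≤ γ/(1+β₀)^(n+1) := Metric.mem_closedBall.mp hx
        set cp := M * d^((1:ℝ)/q - 1) / 2 with hcp_def
        have hdr1 : 0 < d^((1:ℝ)/q - 1) := Real.rpow_pos_of_pos hdpos _
        have hcp : 0 < cp := by rw [hcp_def]; positivity
        obtain ⟨p, hp⟩ := exists_prox x cp hcp
        have hsg := prox_subgrad x p cp hcp hp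
        set D := ‖x - p‖ with hD_def
        have hD0 : 0 ≤ D := norm_nonneg _
        set v := (2*cp) • (x - p) with hv_def
        have hvnorm : ‖v‖ = 2*cp*D := by
          rw [hv_def, norm_smul, Real.norm_eq_abs, abs_of_pos (by linarith)]
        have hvinner : ⟪v, x - p⟫ = 2*cp*D^2 := by
          rw [hv_def, real_inner_smul_left, real_inner_self_eq_norm_sq]
        have hgx : g p + 2*cp*D^2 ≤ g x := by
          have h := hsg x; rwa [hvinner] at h
        have hdrnat : d^((1:ℝ)/q - 1) * d^(2:ℕ) = d^r := by
          rw [← Real.rpow_natCast d 2, ← Real.rpow_add hdpos]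
          congr 1
          rw [hr_eq]; push_cast; ring
        have hdr0 : (0:ℝ) < d^r := Real.rpow_pos_of_pos hdpos _
        have hdqd : d^((1:ℝ)/q) * d = d^r := by
          nth_rewrite 2 [← Real.rpow_one d]
          rw [← Real.rpow_add hdpos]
          congr 1
          rw [hr_eq]; ring
        by_cases hcase : β₀ * d ≤ D
        · -- long prox step: direct bound
          have h1 : (β₀*d)^2 ≤ D^2 := pow_le_pow_left₀ (by positivity) hcase 2
          have h2 : M * d^((1:ℝ)/q-1) * (β₀*d)^2 ≤ M * d^((1:ℝ)/q-1) * D^2 :=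
            mul_le_mul_of_nonneg_left h1 (by positivity)
          have h3 : M * d^((1:ℝ)/q-1) * (β₀*d)^2 = M * β₀^2 * d^r := by
            rw [mul_pow, show M * d^((1:ℝ)/q-1) * (β₀^2*d^2) = M*β₀^2*(d^((1:ℝ)/q-1)*d^(2:ℕ)) by ring, hdrnat]
          have h4 : cstar * d^r ≤ M * β₀^2 * d^r :=
            mul_le_mul_of_nonneg_right hMc hdr0.le
          have h5 : 2*cp*D^2 = M * d^((1:ℝ)/q-1) * D^2 := by rw [hcp_def]; ring
          have h6 : min ((((n:ℕ)+1 : ℕ):ℝ)*δ) cstar ≤ cstar := min_le_right _ _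
          calc min ((((n:ℕ)+1 : ℕ):ℝ)*δ) cstar * d^r ≤ cstar * d^r :=
                mul_le_mul_of_nonneg_right h6 hdr0.le
            _ ≤ M * β₀^2 * d^r := h4
            _ = M * d^((1:ℝ)/q-1) * (β₀*d)^2 := h3.symm
            _ ≤ M * d^((1:ℝ)/q-1) * D^2 := h2
            _ = 2*cp*D^2 := h5.symm
            _ ≤ g x := by linarith only [hgx, hnn p]
        · push_neg at hcase
          -- p stays in the previous ball
          have hdistpx : dist p x = D := by rw [dist_comm, dist_eq_norm]
          have hpball : dist p xb ≤ γ/(1+β₀)^n := by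
            have h1 : dist p xb ≤ dist p x + dist x xb := dist_triangle _ _ _
            have h3 : D ≤ β₀ * (γ/(1+β₀)^(n+1)) := by
              calc D ≤ β₀ * d := hcase.le
                _ ≤ β₀ * (γ/(1+β₀)^(n+1)) :=
                  mul_le_mul_of_nonneg_left (hdx.trans hxball) hβ₀pos.le
            have h4 : β₀ * (γ/(1+β₀)^(n+1)) + γ/(1+β₀)^(n+1) = γ/(1+β₀)^n := by
              rw [pow_succ]
              field_simp
              ring
            rw [hdistpx] at h1
            linarith only [h1, h3, h4, hxball]
          have hpγ : p ∈ closedBall xb γ := by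
            rw [Metric.mem_closedBall]
            refine hpball.trans ?_
            exact div_le_self hγ.le (one_le_pow₀ hβ₀1)
          have hsubp : Metric.infDist p S ≤ κ * ‖v‖^q := hsub p hpγ v hsg
          set d' := Metric.infDist p S with hd'_def
          have hd'0 : 0 ≤ d' := Metric.infDist_nonneg
          have hd'lb : d - D ≤ d' := by
            have h := Metric.infDist_le_infDist_add_dist (x := x) (y := p) (s := S)
            rw [dist_eq_norm] at h
            have h2 : d ≤ d' + D := h
            linarith only [h2]
          -- subregularity: lower bound on ‖v‖
          have hvlb : a * d'^((1:ℝ)/q) ≤ ‖v‖ := by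
            have h1 : d'^((1:ℝ)/q) ≤ (κ*‖v‖^q)^((1:ℝ)/q) :=
              Real.rpow_le_rpow hd'0 hsubp (by positivity)
            have h2 : (κ*‖v‖^q)^((1:ℝ)/q) = κ^((1:ℝ)/q) * ‖v‖ := by
              rw [Real.mul_rpow hκ.le (Real.rpow_nonneg (norm_nonneg v) q),
                ← Real.rpow_mul (norm_nonneg v), mul_one_div, div_self hq.ne', Real.rpow_one]
            have haa : a * κ^((1:ℝ)/q) = 1 := by
              rw [ha_def, ← Real.rpow_add hκ]
              rw [show -(1:ℝ)/q + 1/q = 0 by ring, Real.rpow_zero]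
            calc a * d'^((1:ℝ)/q) ≤ a * (κ^((1:ℝ)/q) * ‖v‖) :=
                  mul_le_mul_of_nonneg_left (h2 ▸ h1) ha.le
              _ = (a * κ^((1:ℝ)/q)) * ‖v‖ := by ring
              _ = ‖v‖ := by rw [haa, one_mul]
          -- lower bound on the step length D
          have h1mβ₀d : (1-β₀)*d ≤ d' := by linarith only [hd'lb, hcase]
          have hDlb : α'/M * d ≤ D := by
            have h2 : a*((1-β₀)*d)^((1:ℝ)/q) ≤ a*d'^((1:ℝ)/q) :=
              mul_le_mul_of_nonneg_left
                (Real.rpow_le_rpow (mul_nonneg (by linarith only [hβ₀lt1]) hd0)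
                  h1mβ₀d (by positivity)) ha.le
            have h3 : a*((1-β₀)*d)^((1:ℝ)/q) = α' * d^((1:ℝ)/q) := by
              rw [Real.mul_rpow (by linarith : (0:ℝ) ≤ 1-β₀) hd0, ← mul_assoc, hkey]
            have h4 : α' * d^((1:ℝ)/q) ≤ M * d^((1:ℝ)/q-1) * D := by
              have : 2*cp*D = M * d^((1:ℝ)/q-1) * D := by rw [hcp_def]; ring
              rw [← this, ← hvnorm]
              linarith only [h2, h3, hvlb]
            have h5 : d^((1:ℝ)/q - 1) * d = d^((1:ℝ)/q) := by
              nth_rewrite 2 [← Real.rpow_one d]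
              rw [← Real.rpow_add hdpos]
              congr 1
              ring
            have h6 : (α' * d) * d^((1:ℝ)/q-1) ≤ (M * D) * d^((1:ℝ)/q-1) := by
              calc (α' * d) * d^((1:ℝ)/q-1) = α' * (d^((1:ℝ)/q-1) * d) := by ring
                _ = α' * d^((1:ℝ)/q) := by rw [h5]
                _ ≤ M * d^((1:ℝ)/q-1) * D := h4
                _ = (M * D) * d^((1:ℝ)/q-1) := by ring
            have h7 : α' * d ≤ M * D := le_of_mul_le_mul_right h6 hdr1
            rw [div_mul_eq_mul_div, div_le_iff₀ hM0]
            linarith only [h7]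
          -- induction hypothesis at p
          have hihp := ih p (Metric.mem_closedBall.mpr hpball)
          rw [← hd'_def] at hihp
          set c := min ((n:ℝ)*δ) cstar with hc_def
          have hc0 : 0 ≤ c := le_min (by positivity) hcs.le
          have hccs : c ≤ cstar := min_le_right _ _
          set β := D/d with hβ_def
          have hβ0 : 0 ≤ β := div_nonneg hD0 hd0
          have hββ₀ : β < β₀ := (div_lt_iff₀ hdpos).mpr (by linarith only [hcase])
          have hβmin : α'/M ≤ β := (le_div_iff₀ hdpos).mpr hDlb
          have hDeq : D = β * d := by rw [hβ_def]; field_simp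
          have h1mβ : 0 < 1 - β := by linarith only [hββ₀, hβ₀lt1]
          have h1mβd : (1-β)*d ≤ d' := by
            rw [hDeq] at hd'lb; linarith only [hd'lb]
          -- chain part 1
          have e1 : g p + ‖v‖ * D ≤ g x := by
            have h : 2*cp*D*D = 2*cp*D^2 := by ring
            rw [hvnorm]
            linarith only [hgx, h]
          have e2 : a*d'^((1:ℝ)/q)*D ≤ ‖v‖*D := mul_le_mul_of_nonneg_right hvlb hD0
          have e3 : c * d'^r ≤ g p := hihp
          have chain1 : c * d'^r + a*d'^((1:ℝ)/q)*D ≤ g x := by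
            linarith only [e1, e2, e3]
          -- monotone replacement of d' by (1-β)d
          have hmono1 : ((1-β)*d)^r ≤ d'^r :=
            Real.rpow_le_rpow (by positivity) h1mβd hrpos.le
          have hmono2 : ((1-β)*d)^((1:ℝ)/q) ≤ d'^((1:ℝ)/q) :=
            Real.rpow_le_rpow (by positivity) h1mβd (by positivity)
          have hsplit1 : ((1-β)*d)^r = (1-β)^r * d^r :=
            Real.mul_rpow h1mβ.le hd0
          have hsplit2 : ((1-β)*d)^((1:ℝ)/q) = (1-β)^((1:ℝ)/q) * d^((1:ℝ)/q) :=
            Real.mul_rpow h1mβ.le hd0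
          have hbern : 1 - r*β ≤ (1-β)^r := by
            have h := one_add_mul_self_le_rpow_one_add (s := -β) (by linarith) hr1
            have he : (1:ℝ) + -β = 1 - β := by ring
            rw [he] at h
            linarith only [h]
          have hmono3 : (1-β₀)^((1:ℝ)/q) ≤ (1-β)^((1:ℝ)/q) :=
            Real.rpow_le_rpow (by linarith) (by linarith) (by positivity)
          have hcr : c * r ≤ α := by
            calc c * r ≤ cstar * r := mul_le_mul_of_nonneg_right hccs hrpos.le
              _ = α := hcsr
          -- assemble the lower bound
          have hBq0 : 0 ≤ (1-β)^((1:ℝ)/q) := Real.rpow_nonneg h1mβ.le _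
          have hB0 : 0 ≤ (1-β)^r := Real.rpow_nonneg h1mβ.le _
          have stepA : c * ((1-β)^r * d^r) ≤ c * d'^r := by
            rw [← hsplit1]
            exact mul_le_mul_of_nonneg_left hmono1 hc0
          have stepB : α' * β * d^r ≤ a*d'^((1:ℝ)/q)*D := by
            have b1 : a * ((1-β₀)^((1:ℝ)/q) * d^((1:ℝ)/q)) * D ≤ a*d'^((1:ℝ)/q)*D := by
              apply mul_le_mul_of_nonneg_right _ hD0
              apply mul_le_mul_of_nonneg_left _ ha.le
              calc (1-β₀)^((1:ℝ)/q) * d^((1:ℝ)/q)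
                  ≤ (1-β)^((1:ℝ)/q) * d^((1:ℝ)/q) :=
                    mul_le_mul_of_nonneg_right hmono3 (Real.rpow_nonneg hd0 _)
                _ = ((1-β)*d)^((1:ℝ)/q) := hsplit2.symm
                _ ≤ d'^((1:ℝ)/q) := hmono2
            have b2 : a * ((1-β₀)^((1:ℝ)/q) * d^((1:ℝ)/q)) * D = α' * β * d^r := by
              rw [hDeq, show a * ((1-β₀)^((1:ℝ)/q) * d^((1:ℝ)/q)) * (β*d)
                = (a * (1-β₀)^((1:ℝ)/q)) * (β*(d^((1:ℝ)/q)*d)) from by ring, hkey, hdqd]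
              ring
            linarith only [b1, b2]
          have stepC : (c + δ) * d^r ≤ c * ((1-β)^r * d^r) + α' * β * d^r := by
            have c1 : c * (1 - r*β) ≤ c * (1-β)^r := mul_le_mul_of_nonneg_left hbern hc0
            have c2 : c + δ ≤ c * (1-β)^r + α' * β := by
              have hbt : β*θ = β*α' - β*α := by rw [hθ_def]; ring
              have hprod : 0 ≤ β * (α - c*r) := mul_nonneg hβ0 (sub_nonneg.mpr hcr)
              have c3 : c + β*θ ≤ c * (1 - r*β) + α' * β := by
                linarith only [hbt, hprod]
              have hprod2 : 0 ≤ (β - α'/M) * θ :=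
                mul_nonneg (sub_nonneg.mpr hβmin) hθpos.le
              have c4 : c + δ ≤ c + β*θ := by
                rw [hδ_def]
                linarith only [hprod2]
              linarith only [c3, c4, c1]
            calc (c + δ) * d^r ≤ (c * (1-β)^r + α' * β) * d^r :=
                mul_le_mul_of_nonneg_right c2 hdr0.le
              _ = c * ((1-β)^r * d^r) + α' * β * d^r := by ring
          have stepD : min (((n:ℕ)+1:ℝ)*δ) cstar ≤ c + δ := by
            rw [hc_def]
            rcases le_total ((n:ℝ)*δ) cstar with h | h
            · rw [min_eq_left h]
              calc min (((n:ℕ)+1:ℝ)*δ) cstar ≤ ((n:ℕ)+1:ℝ)*δ := min_le_left _ _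
                _ = (n:ℝ)*δ + δ := by push_cast; ring
            · rw [min_eq_right h]
              calc min (((n:ℕ)+1:ℝ)*δ) cstar ≤ cstar := min_le_right _ _
                _ ≤ cstar + δ := by linarith only [hδpos]
          have final : min (((n:ℕ)+1:ℝ)*δ) cstar * d^r ≤ g x := by
            calc min (((n:ℕ)+1:ℝ)*δ) cstar * d^r ≤ (c + δ) * d^r :=
                mul_le_mul_of_nonneg_right stepD hdr0.le
              _ ≤ c * ((1-β)^r * d^r) + α' * β * d^r := stepC
              _ ≤ c * d'^r + a*d'^((1:ℝ)/q)*D := by linarith only [stepA, stepB]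
              _ ≤ g x := chain1
          push_cast at final ⊢
          exact final
  -- conclude
  obtain ⟨n, hn⟩ := exists_nat_gt (cstar/δ)
  have hncs : cstar ≤ (n:ℝ)*δ := by
    rw [div_lt_iff₀ hδpos] at hn
    linarith only [hn]
  refine ⟨γ/(1+β₀)^n, by positivity, fun x hx => ?_⟩
  have := main n x hx
  rwa [min_eq_right hncs] at this

/-- The (convex) subdifferential of `f : X → ℝ` at `x`. -/
def convexSubdiff {X : Type*} [NormedAddCommGroup X] [InnerProductSpace ℝ X]
    (f : X → ℝ) (x : X) : Set X :=
  {v : X | ∀ u : X, f x + ⟪v, u - x⟫ ≤ f u}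

/-- metric q-subregularity of the subdifferential mapping with
modulus `κ̃` implies the growth condition with any rate `α < κ̃^(-1/q)`. -/
theorem q_subregularity_of_subdifferential_implies_growth
    {X : Type*} [NormedAddCommGroup X] [InnerProductSpace ℝ X] [CompleteSpace X]
    (f : X → ℝ) (hf : ConvexOn ℝ Set.univ f) (hfc : Continuous f)
    (xb xs : X) (hxs : xs ∈ convexSubdiff f xb)
    (q : ℝ) (hq : 0 < q) (κ γ : ℝ) (hκ : 0 < κ) (hγ : 0 < γ)
    (hsub : ∀ x ∈ closedBall xb γ, ∀ xstar ∈ convexSubdiff f x,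
      Metric.infDist x {u : X | xs ∈ convexSubdiff f u} ≤ κ * ‖xstar - xs‖ ^ q) :
    ∀ α : ℝ, 0 < α → α < κ ^ (-(1 : ℝ) / q) →
      ∃ η > (0 : ℝ), ∀ x ∈ closedBall xb η,
        f xb + ⟪xs, x - xb⟫ + q * α / (1 + q) *
          Metric.infDist x {u : X | xs ∈ convexSubdiff f u} ^ ((1 + q) / q) ≤ f x := by
  intro α hα hαa
  set S : Set X := {u : X | xs ∈ convexSubdiff f u} with hS_def
  set g : X → ℝ := fun z => f z - f xb - ⟪xs, z - xb⟫ with hg_def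
  have hxs' : ∀ u : X, f xb + ⟪xs, u - xb⟫ ≤ f u := hxs
  have hnn : ∀ z, 0 ≤ g z := by
    intro z
    have := hxs' z
    simp only [hg_def]
    linarith only [this]
  have hgconv : ConvexOn ℝ Set.univ g := by
    refine ⟨convex_univ, fun z _ w _ ta tb hta htb htab => ?_⟩
    have hfz := hf.2 (Set.mem_univ z) (Set.mem_univ w) hta htb htab
    simp only [hg_def, smul_eq_mul]
    have hin : ⟪xs, ta • z + tb • w - xb⟫
        = ta * ⟪xs, z - xb⟫ + tb * ⟪xs, w - xb⟫ := by
      simp only [inner_sub_right, inner_add_right, real_inner_smul_right]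
      linear_combination (⟪xs, xb⟫ : ℝ) * htab
    rw [hin]
    have hfzw : f (ta • z + tb • w) ≤ ta * f z + tb * f w := by
      simpa [smul_eq_mul] using hfz
    have hfb : ta * f xb + tb * f xb = f xb := by rw [← add_mul, htab, one_mul]
    linarith only [hfzw, hfb]
  have hgc : Continuous g := by
    apply (hfc.sub continuous_const).sub
    exact Continuous.inner continuous_const (continuous_id.sub continuous_const)
  have hxbS : xb ∈ S := hxs
  have hsub' : ∀ u ∈ closedBall xb γ, ∀ v : X, (∀ z, g u + ⟪v, z - u⟫ ≤ g z) →
      Metric.infDist u S ≤ κ * ‖v‖ ^ q := by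
    intro u hu v hv
    have hmem : xs + v ∈ convexSubdiff f u := by
      intro z
      have h1 := hv z
      simp only [hg_def] at h1
      have h2 : ⟪xs, z - xb⟫ - ⟪xs, u - xb⟫ = ⟪xs, z - u⟫ := by
        rw [← inner_sub_right]
        congr 1
        abel
      have h3 : ⟪xs + v, z - u⟫ = ⟪xs, z - u⟫ + ⟪v, z - u⟫ := inner_add_left _ _ _
      rw [h3, ← h2]
      linarith only [h1]
    have := hsub u hu (xs + v) hmem
    rwa [add_sub_cancel_left] at this
  have hαa' : α < κ ^ (-(1:ℝ)/q) := hαa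
  obtain ⟨η, hη, hgrow⟩ := growth_aux g hgconv hgc hnn S xb hxbS q κ γ α hq hκ hγ hα hαa'
    hsub' (fun u cp hcp => exists_prox g hgconv hgc hnn u cp hcp)
    (fun u p cp hcp hmin => prox_subgrad g hgconv u p cp hcp hmin)
  refine ⟨η, hη, fun x hx => ?_⟩
  have := hgrow x hx
  simp only [hg_def] at this
  linarith only [this]
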